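/- Let T, S be bounded linear operators on a complex Hilbert space and λ ≥ 0. Then w(T*S)² ≤ (1/(2(λ+1)))·‖|T|² + |S|²‖·w(T*S) + (λ/(4(λ+1)))·‖|T|⁴ + |S|⁴‖ + (λ/(2(λ+1)))·w(|S|²|T|²), and the right-hand side is at most (1/(2(λ+1)))·‖|T|² + |S|²‖·w(T*S) + (λ/(2(λ+1)))·‖|T|⁴ + |S|⁴‖. -/

import Mathlib

open scoped InnerProductSpace NNReal
open ContinuousLinearMap

variable {H : Type*} [NormedAddCommGroup H] [InnerProductSpace ℂ H]

noncomputable def numRadius [CompleteSpace H] (T : H →L[ℂ] H) : ℝ :=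
  ⨆ x : {x : H // ‖x‖ = 1}, ‖⟪T x, (x : H)⟫_ℂ‖

noncomputable def opAbs [CompleteSpace H] (T : H →L[ℂ] H) : H →L[ℂ] H :=
  CFC.sqrt (ContinuousLinearMap.adjoint T * T)

lemma nr_nonneg [CompleteSpace H] (T : H →L[ℂ] H) : 0 ≤ numRadius T :=
  Real.iSup_nonneg fun _ => norm_nonneg _

lemma nr_le [CompleteSpace H] {T : H →L[ℂ] H} {c : ℝ} (hc : 0 ≤ c)
    (h : ∀ x : H, ‖x‖ = 1 → ‖⟪T x, x⟫_ℂ‖ ≤ c) : numRadius T ≤ c :=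
  Real.iSup_le (fun x => h x x.2) hc

lemma le_nr [CompleteSpace H] (T : H →L[ℂ] H) (x : H) (hx : ‖x‖ = 1) :
    ‖⟪T x, x⟫_ℂ‖ ≤ numRadius T := by
  have hb : BddAbove (Set.range fun x : {x : H // ‖x‖ = 1} => ‖⟪T x, (x : H)⟫_ℂ‖) := by
    refine ⟨‖T‖, ?_⟩
    rintro r ⟨y, rfl⟩
    calc ‖⟪T y, (y : H)⟫_ℂ‖ ≤ ‖T (y : H)‖ * ‖(y : H)‖ := norm_inner_le_norm _ _
      _ ≤ ‖T‖ * ‖(y : H)‖ * ‖(y : H)‖ := by gcongr; exact le_opNorm T y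
      _ = ‖T‖ := by rw [y.2]; ring
  exact le_ciSup hb (⟨x, hx⟩ : {x : H // ‖x‖ = 1})

lemma opAbs_sq [CompleteSpace H] (T : H →L[ℂ] H) : opAbs T ^ 2 = adjoint T * T := by
  have h : (0 : H →L[ℂ] H) ≤ adjoint T * T := by
    rw [← star_eq_adjoint]; exact star_mul_self_nonneg T
  exact CFC.sq_sqrt _ h

lemma opAbs_sq_selfAdjoint [CompleteSpace H] (T : H →L[ℂ] H) :
    adjoint (opAbs T ^ 2) = opAbs T ^ 2 := by
  rw [opAbs_sq, ← star_eq_adjoint]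
  simp [star_mul, star_eq_adjoint, adjoint_adjoint]

/-- Buzano's inequality. -/
lemma buzano (u v e : H) (he : ‖e‖ = 1) :
    ‖⟪u, e⟫_ℂ * ⟪e, v⟫_ℂ‖ ≤ (‖u‖ * ‖v‖ + ‖⟪u, v⟫_ℂ‖) / 2 := by
  set c := ⟪e, v⟫_ℂ with hc
  set z := ((2 : ℂ) * c) • e - v with hz
  have hee : ⟪e, e⟫_ℂ = 1 := by
    rw [inner_self_eq_norm_sq_to_K, he]; norm_num
  have hve : ⟪v, e⟫_ℂ = (starRingEnd ℂ) c := by rw [hc, ← inner_conj_symm]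
  have hinner : ⟪z, z⟫_ℂ = ⟪v, v⟫_ℂ := by
    rw [hz]
    simp only [inner_sub_left, inner_sub_right, inner_smul_left, inner_smul_right, hee, hve,
      map_mul, map_ofNat, ← hc] <;> ring
  have hzn : ‖z‖ ^ 2 = ‖v‖ ^ 2 := by
    have h1 := inner_self_eq_norm_sq_to_K (𝕜 := ℂ) z
    have h2 := inner_self_eq_norm_sq_to_K (𝕜 := ℂ) v
    rw [h1, h2] at hinner
    exact_mod_cast hinner
  have hzle : ‖z‖ ≤ ‖v‖ := by nlinarith [norm_nonneg z, norm_nonneg v]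
  have hiz : ⟪u, z⟫_ℂ = 2 * c * ⟪u, e⟫_ℂ - ⟪u, v⟫_ℂ := by
    rw [hz, inner_sub_right, inner_smul_right]; try ring
  have key : ‖2 * c * ⟪u, e⟫_ℂ‖ ≤ ‖u‖ * ‖v‖ + ‖⟪u, v⟫_ℂ‖ := by
    have h3 : 2 * c * ⟪u, e⟫_ℂ = ⟪u, z⟫_ℂ + ⟪u, v⟫_ℂ := by rw [hiz]; ring
    calc ‖2 * c * ⟪u, e⟫_ℂ‖ = ‖⟪u, z⟫_ℂ + ⟪u, v⟫_ℂ‖ := by rw [h3]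
      _ ≤ ‖⟪u, z⟫_ℂ‖ + ‖⟪u, v⟫_ℂ‖ := norm_add_le _ _
      _ ≤ ‖u‖ * ‖z‖ + ‖⟪u, v⟫_ℂ‖ := by gcongr; exact norm_inner_le_norm _ _
      _ ≤ ‖u‖ * ‖v‖ + ‖⟪u, v⟫_ℂ‖ := by gcongr
  have h4 : ‖2 * c * ⟪u, e⟫_ℂ‖ = 2 * ‖⟪u, e⟫_ℂ * c‖ := by
    rw [show 2 * c * ⟪u, e⟫_ℂ = 2 * (⟪u, e⟫_ℂ * c) by ring, norm_mul]
    norm_num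
  linarith [key, h4.symm.trans_le key]

lemma quad_re_le [CompleteSpace H] (C : H →L[ℂ] H) (x : H) (hx : ‖x‖ = 1) :
    RCLike.re ⟪C x, x⟫_ℂ ≤ ‖C‖ := by
  calc RCLike.re ⟪C x, x⟫_ℂ ≤ ‖⟪C x, x⟫_ℂ‖ := RCLike.re_le_norm _
    _ ≤ ‖C x‖ * ‖x‖ := norm_inner_le_norm _ _
    _ ≤ ‖C‖ * ‖x‖ * ‖x‖ := by gcongr; exact le_opNorm C x
    _ = ‖C‖ := by rw [hx]; ring

lemma dragomir [CompleteSpace H] (X Y : H →L[ℂ] H) :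
    numRadius (adjoint X * Y) ≤ ‖adjoint X * X + adjoint Y * Y‖ / 2 := by
  apply nr_le (by positivity)
  intro x hx
  have h1 : ⟪(adjoint X * Y) x, x⟫_ℂ = ⟪Y x, X x⟫_ℂ := by
    rw [ContinuousLinearMap.mul_apply, adjoint_inner_left]
  have h2 : RCLike.re ⟪(adjoint X * X + adjoint Y * Y) x, x⟫_ℂ = ‖X x‖ ^ 2 + ‖Y x‖ ^ 2 := by
    rw [add_apply, inner_add_left, ContinuousLinearMap.mul_apply, ContinuousLinearMap.mul_apply, adjoint_inner_left,
      adjoint_inner_left, map_add, inner_self_eq_norm_sq_to_K, inner_self_eq_norm_sq_to_K]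
    simp [← Complex.ofReal_pow]
  have h3 := quad_re_le (adjoint X * X + adjoint Y * Y) x hx
  rw [h2] at h3
  have h4 : ‖⟪(adjoint X * Y) x, x⟫_ℂ‖ ≤ ‖Y x‖ * ‖X x‖ := by
    rw [h1]; exact norm_inner_le_norm _ _
  nlinarith [sq_nonneg (‖X x‖ - ‖Y x‖)]

lemma arith1 (l N2 N4 wBA w : ℝ) (hl1 : (0:ℝ) < l + 1) :
    (l + 1) * (1 / (2 * (l + 1)) * N2 * w + l / (4 * (l + 1)) * N4 + l / (2 * (l + 1)) * wBA)
      = N2 / 2 * w + l * (N4 / 4 + wBA / 2) := by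
  have h : l + 1 ≠ 0 := ne_of_gt hl1
  field_simp
  ring

lemma arith2 (l N4 wBA : ℝ) (hl1 : (0:ℝ) < l + 1) (hl : 0 ≤ l) (h : wBA ≤ N4 / 2) :
    l / (4 * (l + 1)) * N4 + l / (2 * (l + 1)) * wBA ≤ l / (2 * (l + 1)) * N4 := by
  have h2 : (2 * (l + 1)) ≠ 0 := by positivity
  have h4 : (4 * (l + 1)) ≠ 0 := by positivity
  have hc : (0:ℝ) ≤ 8 * (l + 1) * (l + 1) * l :=
    mul_nonneg (mul_nonneg (mul_nonneg (by norm_num) (by linarith)) (by linarith)) hl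
  have h' := mul_le_mul_of_nonneg_left h hc
  rw [div_mul_eq_mul_div, div_mul_eq_mul_div, div_mul_eq_mul_div, div_add_div _ _ h4 h2,
    div_le_div_iff₀ (by positivity) (by positivity)]
  nlinarith [h']

set_option maxHeartbeats 1000000 in
theorem stmt7 [CompleteSpace H] (T S : H →L[ℂ] H) (l : ℝ) (hl : 0 ≤ l) :
    numRadius (adjoint T * S) ^ 2 ≤
        (1 / (2 * (l + 1))) * ‖opAbs T ^ 2 + opAbs S ^ 2‖ * numRadius (adjoint T * S)
          + (l / (4 * (l + 1))) * ‖opAbs T ^ 4 + opAbs S ^ 4‖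
          + (l / (2 * (l + 1))) * numRadius (opAbs S ^ 2 * opAbs T ^ 2) ∧
      (1 / (2 * (l + 1))) * ‖opAbs T ^ 2 + opAbs S ^ 2‖ * numRadius (adjoint T * S)
          + (l / (4 * (l + 1))) * ‖opAbs T ^ 4 + opAbs S ^ 4‖
          + (l / (2 * (l + 1))) * numRadius (opAbs S ^ 2 * opAbs T ^ 2) ≤
        (1 / (2 * (l + 1))) * ‖opAbs T ^ 2 + opAbs S ^ 2‖ * numRadius (adjoint T * S)
          + (l / (2 * (l + 1))) * ‖opAbs T ^ 4 + opAbs S ^ 4‖ := by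
  have hl1 : (0:ℝ) < l + 1 := by linarith
  have hA : opAbs T ^ 2 = adjoint T * T := opAbs_sq T
  have hB : opAbs S ^ 2 = adjoint S * S := opAbs_sq S
  have hAsa := opAbs_sq_selfAdjoint T
  have hBsa := opAbs_sq_selfAdjoint S
  set A := opAbs T ^ 2 with hAdef
  set B := opAbs S ^ 2 with hBdef
  have hA4 : opAbs T ^ 4 = A ^ 2 := by rw [hAdef, ← pow_mul]
  have hB4 : opAbs S ^ 4 = B ^ 2 := by rw [hBdef, ← pow_mul]
  set w := numRadius (adjoint T * S) with hwdef
  set wBA := numRadius (B * A) with hwBAdef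
  set N2 := ‖A + B‖ with hN2def
  set N4 := ‖opAbs T ^ 4 + opAbs S ^ 4‖ with hN4def
  have hN4 : N4 = ‖A ^ 2 + B ^ 2‖ := by rw [hN4def, hA4, hB4]
  have hw0 : 0 ≤ w := nr_nonneg _
  have hwBA0 : 0 ≤ wBA := nr_nonneg _
  have hN20 : 0 ≤ N2 := by rw [hN2def]; exact norm_nonneg _
  have hN40 : 0 ≤ N4 := by rw [hN4def]; exact norm_nonneg _
  -- pointwise inner product formulas
  have hAx : ∀ x : H, ⟪A x, x⟫_ℂ = ((‖T x‖ : ℂ)) ^ 2 := fun x => by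
    rw [hA, ContinuousLinearMap.mul_apply, adjoint_inner_left, inner_self_eq_norm_sq_to_K]
    norm_cast
  have hBx : ∀ x : H, ⟪B x, x⟫_ℂ = ((‖S x‖ : ℂ)) ^ 2 := fun x => by
    rw [hB, ContinuousLinearMap.mul_apply, adjoint_inner_left, inner_self_eq_norm_sq_to_K]
    norm_cast
  have hA2x : ∀ x : H, ⟪(A ^ 2) x, x⟫_ℂ = ((‖A x‖ : ℂ)) ^ 2 := fun x => by
    have h := adjoint_inner_left A x (A x)
    rw [hAsa] at h
    rw [sq, ContinuousLinearMap.mul_apply, h, inner_self_eq_norm_sq_to_K]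
    norm_cast
  have hB2x : ∀ x : H, ⟪(B ^ 2) x, x⟫_ℂ = ((‖B x‖ : ℂ)) ^ 2 := fun x => by
    have h := adjoint_inner_left B x (B x)
    rw [hBsa] at h
    rw [sq, ContinuousLinearMap.mul_apply, h, inner_self_eq_norm_sq_to_K]
    norm_cast
  -- Dragomir for B * A
  have hdrag : wBA ≤ N4 / 2 := by
    have h := dragomir B A
    rw [hBsa, hAsa] at h
    rw [hwBAdef, hN4]
    calc numRadius (B * A) ≤ ‖B * B + A * A‖ / 2 := h
      _ = ‖A ^ 2 + B ^ 2‖ / 2 := by rw [← sq, ← sq, add_comm]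
  set M := 1 / (2 * (l + 1)) * N2 * w + l / (4 * (l + 1)) * N4 + l / (2 * (l + 1)) * wBA
    with hMdef
  have c1 : (0:ℝ) ≤ 1 / (2 * (l + 1)) := div_nonneg zero_le_one (by linarith)
  have c2 : (0:ℝ) ≤ l / (4 * (l + 1)) := div_nonneg hl (by linarith)
  have c3 : (0:ℝ) ≤ l / (2 * (l + 1)) := div_nonneg hl (by linarith)
  have hM0 : 0 ≤ M := by
    rw [hMdef]
    exact add_nonneg (add_nonneg (mul_nonneg (mul_nonneg c1 hN20) hw0)
      (mul_nonneg c2 hN40)) (mul_nonneg c3 hwBA0)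
  have key : ∀ x : H, ‖x‖ = 1 → ‖⟪(adjoint T * S) x, x⟫_ℂ‖ ≤ Real.sqrt M := by
    intro x hx
    set p := ‖⟪(adjoint T * S) x, x⟫_ℂ‖ with hpdef
    have hp0 : 0 ≤ p := norm_nonneg _
    have hpw : p ≤ w := le_nr _ x hx
    have hpST : p ≤ ‖S x‖ * ‖T x‖ := by
      rw [hpdef, ContinuousLinearMap.mul_apply, adjoint_inner_left]
      exact norm_inner_le_norm _ _
    have hsum2 : ‖T x‖ ^ 2 + ‖S x‖ ^ 2 ≤ N2 := by
      have h := quad_re_le (A + B) x hx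
      have h2 : RCLike.re ⟪(A + B) x, x⟫_ℂ = ‖T x‖ ^ 2 + ‖S x‖ ^ 2 := by
        rw [add_apply, inner_add_left, hAx x, hBx x]
        simp [← Complex.ofReal_pow]
      rw [h2] at h
      rw [hN2def]
      exact h
    have hpN2 : p ≤ N2 / 2 := by
      nlinarith [sq_nonneg (‖T x‖ - ‖S x‖)]
    have hsum4 : ‖A x‖ ^ 2 + ‖B x‖ ^ 2 ≤ N4 := by
      have h := quad_re_le (A ^ 2 + B ^ 2) x hx
      have h2 : RCLike.re ⟪(A ^ 2 + B ^ 2) x, x⟫_ℂ = ‖A x‖ ^ 2 + ‖B x‖ ^ 2 := by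
        rw [add_apply, inner_add_left, hA2x x, hB2x x]
        simp [← Complex.ofReal_pow]
      rw [h2] at h
      rw [hN4]
      exact h
    have hABx : ‖⟪A x, B x⟫_ℂ‖ ≤ wBA := by
      have h := adjoint_inner_left B x (A x)
      rw [hBsa] at h
      have h2 : ⟪(B * A) x, x⟫_ℂ = ⟪A x, B x⟫_ℂ := by rw [ContinuousLinearMap.mul_apply]; exact h
      rw [← h2]
      exact le_nr _ x hx
    have hbuz := buzano (A x) (B x) x hx
    have hxB : ⟪x, B x⟫_ℂ = ((‖S x‖ : ℂ)) ^ 2 := by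
      rw [← inner_conj_symm, hBx x]
      simp [← Complex.ofReal_pow]
    have hnorm : ‖⟪A x, x⟫_ℂ * ⟪x, B x⟫_ℂ‖ = ‖T x‖ ^ 2 * ‖S x‖ ^ 2 := by
      rw [hAx x, hxB, ← Complex.ofReal_pow, ← Complex.ofReal_pow, ← Complex.ofReal_mul,
        Complex.norm_real]
      exact abs_of_nonneg (by positivity)
    rw [hnorm] at hbuz
    have hAB2 : ‖A x‖ * ‖B x‖ ≤ N4 / 2 := by
      nlinarith [sq_nonneg (‖A x‖ - ‖B x‖)]
    have hprod : ‖T x‖ ^ 2 * ‖S x‖ ^ 2 ≤ N4 / 4 + wBA / 2 := by linarith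
    have hpsq : p ^ 2 ≤ N4 / 4 + wBA / 2 := by
      nlinarith [mul_le_mul hpST hpST hp0 (mul_nonneg (norm_nonneg (S x)) (norm_nonneg (T x)))]
    have hpM : p ^ 2 ≤ M := by
      have h1 : (l + 1) * p ^ 2 ≤ (l + 1) * M := by
        have t1 : p ^ 2 ≤ N2 / 2 * p := by
          rw [sq]; exact mul_le_mul_of_nonneg_right hpN2 hp0
        have t2 : l * p ^ 2 ≤ l * (N4 / 4 + wBA / 2) := mul_le_mul_of_nonneg_left hpsq hl
        have t3 : N2 / 2 * p ≤ N2 / 2 * w :=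
          mul_le_mul_of_nonneg_left hpw (by linarith)
        have e : (l + 1) * M = N2 / 2 * w + l * (N4 / 4 + wBA / 2) := by
          rw [hMdef]; exact arith1 l N2 N4 wBA w hl1
        calc (l + 1) * p ^ 2 = p ^ 2 + l * p ^ 2 := by ring
          _ ≤ N2 / 2 * p + l * (N4 / 4 + wBA / 2) := add_le_add t1 t2
          _ ≤ N2 / 2 * w + l * (N4 / 4 + wBA / 2) := add_le_add_left t3 _
          _ = (l + 1) * M := e.symm
      exact le_of_mul_le_mul_left h1 hl1
    have := Real.sqrt_le_sqrt hpM
    rwa [Real.sqrt_sq hp0] at this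
  have hwM : w ≤ Real.sqrt M := nr_le (Real.sqrt_nonneg _) key
  have hw2 : w ^ 2 ≤ M := by
    calc w ^ 2 ≤ Real.sqrt M ^ 2 := pow_le_pow_left₀ hw0 hwM 2
      _ = M := Real.sq_sqrt hM0
  constructor
  · exact hw2
  · have h := arith2 l N4 wBA hl1 hl hdrag
    rw [hMdef]
    calc 1 / (2 * (l + 1)) * N2 * w + l / (4 * (l + 1)) * N4 + l / (2 * (l + 1)) * wBA
        = 1 / (2 * (l + 1)) * N2 * w + (l / (4 * (l + 1)) * N4 + l / (2 * (l + 1)) * wBA) := by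
          ring
      _ ≤ 1 / (2 * (l + 1)) * N2 * w + l / (2 * (l + 1)) * N4 := add_le_add_right h _
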